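/- arXiv:1011.4546 — 3 statements merged into one kernel-verified Lean document; each statement's English description precedes it below -/
import Mathlib

section
/- Let n be a nonnegative integer and let a, b be complex numbers such that b + 1/2 and a − n + 1/2 are not nonpositive integers and none of a + 1/2, b − a + 1/2, b + n + 1/2, a − n + 1/2, b + 1/2, b − a + n + 1/2 is a pole of Γ. Then the terminating series satisfies ₃F₂(a, b, −n; b + 1/2, a − n + 1/2; 1) = √π · Γ(a − n + 1/2) Γ(b + 1/2) Γ(b − a + n + 1/2) / (Γ(a + 1/2) Γ(1/2 − n) Γ(b − a + 1/2) Γ(b + n + 1/2)). -/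
/-!
Pfaff–Saalschütz. Multiplying the `k`-th term of `₃F₂(a, b, -n; c, 1 + a + b - c - n; 1)` by
`(c)ₙ (c - a - b)ₙ` and using `(-n)ₖ = (-1)ᵏ k! C(n, k)` together with the reflection
`(1 - x - n)ₙ = (-1)ⁿ (x)ₙ` turns the series into the polynomial identity
`∑ₖ C(n, k) (a)ₖ (b)ₖ (c - a - b)ₙ₋ₖ (c + k)ₙ₋ₖ = (c - a)ₙ (c - b)ₙ`, which holds in every commutative
ring. It follows by induction on `n`: by Pascal's rule each term for `n + 1` is
`(c - a + n)(c - b + n)` times the term for `n`, up to a difference that telescopes.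
The theorem is the case `c = b + 1/2`; the Gamma quotients become Pochhammer symbols through
`Γ(z + n) = (z)ₙ Γ(z)` and `Γ(1/2) = √π`.
-/

open Complex Finset

/-- The generalized hypergeometric series ₃F₂(a₁,a₂,a₃; b₁,b₂; 1) over ℂ. -/
noncomputable def hyp3F2 (a₁ a₂ a₃ b₁ b₂ : ℂ) : ℂ :=
  ∑' k : ℕ,
    ((ascPochhammer ℂ k).eval a₁ * (ascPochhammer ℂ k).eval a₂ * (ascPochhammer ℂ k).eval a₃) /
    ((ascPochhammer ℂ k).eval b₁ * (ascPochhammer ℂ k).eval b₂ * (Nat.factorial k : ℂ))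

/-- `x` is not a nonpositive integer (equivalently, not a pole of Γ). -/
def NotNonposInt (x : ℂ) : Prop := ∀ m : ℕ, x ≠ -(m : ℂ)


open Polynomial

section Pochhammer

variable {R : Type*} [CommRing R]

theorem ascPochhammer_eval_add (x : R) (k m : ℕ) :
    (ascPochhammer R (k + m)).eval x =
      (ascPochhammer R k).eval x * (ascPochhammer R m).eval (x + k) := by
  rw [← ascPochhammer_mul, eval_mul, eval_comp, eval_add, eval_X, eval_natCast]

theorem ascPochhammer_eval_one_sub_sub (x : R) (n : ℕ) :
    (ascPochhammer R n).eval (1 - x - n) = (-1) ^ n * (ascPochhammer R n).eval x := by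
  rw [show 1 - x - n = -(x + n - 1) by ring, ascPochhammer_eval_neg_eq_descPochhammer,
    descPochhammer_eval_eq_ascPochhammer, show x + n - 1 - n + 1 = x by ring]

theorem ascPochhammer_eval_eq_neg_one_pow_mul {n k : ℕ} (hk : k ≤ n) (x : R) :
    (ascPochhammer R n).eval x = (-1) ^ k *
      ((ascPochhammer R (n - k)).eval x * (ascPochhammer R k).eval (1 - x - n)) := by
  have hrefl := ascPochhammer_eval_one_sub_sub (x + (n - k : ℕ)) k
  rw [Nat.cast_sub hk, show 1 - (x + (n - k)) - k = 1 - x - n by ring] at hrefl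
  have hsplit := ascPochhammer_eval_add x (n - k) k
  rw [Nat.sub_add_cancel hk, Nat.cast_sub hk] at hsplit
  rw [hrefl, hsplit, ← mul_assoc, ← mul_assoc, mul_comm _ ((-1) ^ k), ← mul_assoc, ← mul_pow,
    neg_one_mul, neg_neg, one_pow, one_mul]

theorem ascPochhammer_eval_neg_natCast (n k : ℕ) :
    (ascPochhammer R k).eval (-(n : R)) = (-1) ^ k * (k.factorial * n.choose k : ℕ) := by
  rw [ascPochhammer_eval_neg_eq_descPochhammer, descPochhammer_eval_eq_descFactorial,
    Nat.descFactorial_eq_factorial_mul_choose]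

end Pochhammer

section Saalschutz

variable {R : Type*} [CommRing R]

noncomputable def saalschutzTerm (a b c : R) (n k : ℕ) : R :=
  n.choose k * (ascPochhammer R k).eval a * (ascPochhammer R k).eval b *
    (ascPochhammer R (n - k)).eval (c - a - b) * (ascPochhammer R (n - k)).eval (c + k)

theorem saalschutzTerm_of_lt (a b c : R) {n k : ℕ} (h : n < k) : saalschutzTerm a b c n k = 0 := by
  simp [saalschutzTerm, Nat.choose_eq_zero_of_lt h]

theorem saalschutzTerm_succ_zero (a b c : R) (n : ℕ) :
    saalschutzTerm a b c (n + 1) 0 =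
      (c - a + n) * (c - b + n) * saalschutzTerm a b c n 0 - a * b * saalschutzTerm a b c n 0 := by
  simp only [saalschutzTerm, Nat.choose_zero_right, Nat.cast_zero, Nat.sub_zero, add_zero,
    ascPochhammer_succ_eval]
  ring

theorem saalschutzTerm_succ_succ (a b c : R) {n j : ℕ} (hj : j ≤ n) :
    saalschutzTerm a b c (n + 1) (j + 1) =
      (c - a + n) * (c - b + n) * saalschutzTerm a b c n (j + 1) +
        ((a + j) * (b + j) * saalschutzTerm a b c n j -
          (a + (j + 1 : ℕ)) * (b + (j + 1 : ℕ)) * saalschutzTerm a b c n (j + 1)) := by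
  obtain ⟨m, rfl⟩ := Nat.exists_eq_add_of_le hj
  rcases m with _ | m
  · rw [saalschutzTerm_of_lt a b c (by omega : j + 0 < j + 1)]
    simp only [saalschutzTerm, add_zero, Nat.sub_self, Nat.choose_self, ascPochhammer_zero,
      eval_one, ascPochhammer_succ_eval]
    push_cast
    ring
  · have hpascal : (j + (m + 1) + 1).choose (j + 1) =
        (j + (m + 1)).choose j + (j + (m + 1)).choose (j + 1) := by
      rw [Nat.choose_succ_succ]
    have habsorb : ((j + (m + 1)).choose (j + 1) : R) * (j + 1) =
        ((j + (m + 1)).choose j : R) * (m + 1) := by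
      have := Nat.choose_succ_right_eq (j + (m + 1)) j
      rw [show j + (m + 1) - j = m + 1 by omega] at this
      exact_mod_cast congrArg (Nat.cast : ℕ → R) this
    have hshift : (ascPochhammer R (m + 1)).eval (c + j) =
        (c + j) * (ascPochhammer R m).eval (c + j + 1) := by
      rw [ascPochhammer_succ_left, eval_mul, eval_X, eval_comp, eval_add, eval_X, eval_one]
    simp only [saalschutzTerm, hpascal, show j + (m + 1) + 1 - (j + 1) = m + 1 by omega,
      show j + (m + 1) - (j + 1) = m by omega, show j + (m + 1) - j = m + 1 by omega]
    rw [hshift, ascPochhammer_succ_eval j a, ascPochhammer_succ_eval j b,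
      ascPochhammer_succ_eval m (c - a - b), ascPochhammer_succ_eval m (c + ((j + 1 : ℕ) : R))]
    push_cast
    rw [show c + ((j : R) + 1) = c + j + 1 by ring]
    linear_combination (-((ascPochhammer R j).eval a * (a + j) * (ascPochhammer R j).eval b *
      (b + j) * (ascPochhammer R m).eval (c - a - b) * (ascPochhammer R m).eval (c + j + 1) *
      (c - a - b + m))) * habsorb

theorem sum_saalschutzTerm (a b c : R) (n : ℕ) :
    ∑ k ∈ range (n + 1), saalschutzTerm a b c n k =
      (ascPochhammer R n).eval (c - a) * (ascPochhammer R n).eval (c - b) := by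
  induction n with
  | zero => simp [saalschutzTerm]
  | succ n ih =>
    set G : ℕ → R := fun k => (a + k) * (b + k) * saalschutzTerm a b c n k
    have hstep : ∀ j ∈ range (n + 1), saalschutzTerm a b c (n + 1) (j + 1) =
        (c - a + n) * (c - b + n) * saalschutzTerm a b c n (j + 1) + (G j - G (j + 1)) :=
      fun j hj => saalschutzTerm_succ_succ a b c (Nat.lt_succ_iff.mp (mem_range.mp hj))
    have hshifted : ∑ j ∈ range (n + 1), saalschutzTerm a b c n (j + 1) =
        ∑ k ∈ range (n + 1), saalschutzTerm a b c n k - saalschutzTerm a b c n 0 := by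
      rw [eq_sub_iff_add_eq, ← sum_range_succ' (saalschutzTerm a b c n), sum_range_succ,
        saalschutzTerm_of_lt a b c (Nat.lt_succ_self n), add_zero]
    rw [sum_range_succ', sum_congr rfl hstep, sum_add_distrib, sum_range_sub', ← mul_sum,
      hshifted, ih, saalschutzTerm_succ_zero, ascPochhammer_succ_eval, ascPochhammer_succ_eval]
    simp only [G, saalschutzTerm_of_lt a b c (Nat.lt_succ_self n)]
    ring

end Saalschutz

theorem ascPochhammer_eval_ne_zero_of_notNonposInt {x : ℂ} (hx : NotNonposInt x) (n : ℕ) :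
    (ascPochhammer ℂ n).eval x ≠ 0 := by
  rw [Ne, ascPochhammer_eval_eq_zero_iff]
  rintro ⟨k, -, hk⟩
  exact hx k (by rw [hk, neg_neg])

theorem notNonposInt_one_half_sub_natCast (n : ℕ) : NotNonposInt (1 / 2 - n) := by
  intro m h
  have h2 : ((2 * n : ℕ) : ℂ) = ((2 * m + 1 : ℕ) : ℂ) := by
    push_cast
    linear_combination -2 * h
  have := Nat.cast_injective h2
  omega

theorem Complex.Gamma_add_natCast_eq_mul {z : ℂ} (hz : NotNonposInt z) (n : ℕ) :
    Gamma (z + n) = (ascPochhammer ℂ n).eval z * Gamma z := by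
  rw [← Gamma_add_nat_div_Gamma_eq z hz, div_mul_cancel₀ _ (Gamma_ne_zero hz)]

theorem hyp3F2_neg_natCast (n : ℕ) (a b c d : ℂ) :
    hyp3F2 a b (-(n : ℂ)) c d = ∑ k ∈ range (n + 1),
      (ascPochhammer ℂ k).eval a * (ascPochhammer ℂ k).eval b * (ascPochhammer ℂ k).eval (-(n : ℂ)) /
        ((ascPochhammer ℂ k).eval c * (ascPochhammer ℂ k).eval d * (k.factorial : ℂ)) := by
  refine tsum_eq_sum fun k hk => ?_
  rw [ascPochhammer_eval_neg_coe_nat_of_lt (by simpa using hk), mul_zero, zero_div]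

theorem hyp3F2_saalschutz (n : ℕ) (a b c : ℂ) (hc : (ascPochhammer ℂ n).eval c ≠ 0)
    (hd : (ascPochhammer ℂ n).eval (1 + a + b - c - n) ≠ 0) :
    hyp3F2 a b (-(n : ℂ)) c (1 + a + b - c - n) =
      (ascPochhammer ℂ n).eval (c - a) * (ascPochhammer ℂ n).eval (c - b) /
        ((ascPochhammer ℂ n).eval c * (ascPochhammer ℂ n).eval (c - a - b)) := by
  have hd' : 1 - (c - a - b) - n = 1 + a + b - c - n := by ring
  have hcab : (ascPochhammer ℂ n).eval (c - a - b) ≠ 0 := by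
    rw [← hd', ascPochhammer_eval_one_sub_sub] at hd
    exact right_ne_zero_of_mul hd
  rw [hyp3F2_neg_natCast, eq_div_iff (mul_ne_zero hc hcab), sum_mul, ← sum_saalschutzTerm]
  refine sum_congr rfl fun k hk => ?_
  have hkn : k ≤ n := Nat.lt_succ_iff.mp (mem_range.mp hk)
  have hsplit := ascPochhammer_eval_add c k (n - k)
  rw [Nat.add_sub_cancel' hkn] at hsplit
  have hrefl := ascPochhammer_eval_eq_neg_one_pow_mul hkn (c - a - b)
  rw [hd'] at hrefl
  have hck : (ascPochhammer ℂ k).eval c ≠ 0 := left_ne_zero_of_mul (hsplit ▸ hc)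
  have hdk : (ascPochhammer ℂ k).eval (1 + a + b - c - n) ≠ 0 :=
    right_ne_zero_of_mul (right_ne_zero_of_mul (hrefl ▸ hcab))
  have hsign : ((-1 : ℂ) ^ k) * (-1) ^ k = 1 := by rw [← mul_pow]; norm_num
  rw [hsplit, hrefl, ascPochhammer_eval_neg_natCast, div_mul_eq_mul_div,
    div_eq_iff (by simp [hck, hdk, Nat.factorial_ne_zero])]
  linear_combination (norm := skip) (saalschutzTerm a b c n k * (ascPochhammer ℂ k).eval c *
    (ascPochhammer ℂ k).eval (1 + a + b - c - n) * k.factorial) * hsign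
  simp only [saalschutzTerm]
  push_cast
  ring

theorem sqrt_pi_mul_Gamma_quotient_eq (n : ℕ) (a b : ℂ)
    (h1 : NotNonposInt (b + 1/2)) (h2 : NotNonposInt (a - n + 1/2))
    (h4 : NotNonposInt (b - a + 1/2)) :
    (Real.sqrt Real.pi : ℂ) * Gamma (a - n + 1/2) * Gamma (b + 1/2) * Gamma (b - a + n + 1/2) /
      (Gamma (a + 1/2) * Gamma (1/2 - n) * Gamma (b - a + 1/2) * Gamma (b + n + 1/2)) =
      (ascPochhammer ℂ n).eval (b - a + 1/2) * (ascPochhammer ℂ n).eval (1/2) /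
        ((ascPochhammer ℂ n).eval (b + 1/2) * (ascPochhammer ℂ n).eval (1/2 - a)) := by
  have hhalf := notNonposInt_one_half_sub_natCast n
  have hsqrt : (Real.sqrt Real.pi : ℂ) =
      (ascPochhammer ℂ n).eval (1/2 - (n : ℂ)) * Gamma (1/2 - n) := by
    rw [← Gamma_add_natCast_eq_mul hhalf, sub_add_cancel, Gamma_one_half_eq, Real.sqrt_eq_rpow,
      ofReal_cpow Real.pi_nonneg]
    norm_num
  have hΓa : Gamma (a + 1/2) = (ascPochhammer ℂ n).eval (a - n + 1/2) * Gamma (a - n + 1/2) := by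
    rw [← Gamma_add_natCast_eq_mul h2]
    congr 1
    ring
  have hΓba : Gamma (b - a + n + 1/2) =
      (ascPochhammer ℂ n).eval (b - a + 1/2) * Gamma (b - a + 1/2) := by
    rw [← Gamma_add_natCast_eq_mul h4]
    congr 1
    ring
  have hΓb : Gamma (b + n + 1/2) = (ascPochhammer ℂ n).eval (b + 1/2) * Gamma (b + 1/2) := by
    rw [← Gamma_add_natCast_eq_mul h1]
    congr 1
    ring
  have hrefl_a := ascPochhammer_eval_one_sub_sub (1/2 - a) n
  have hrefl_half := ascPochhammer_eval_one_sub_sub (1/2 : ℂ) n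
  rw [show 1 - (1/2 - a) - n = a - n + 1/2 by ring] at hrefl_a
  rw [show 1 - 1/2 - n = 1/2 - (n : ℂ) by ring] at hrefl_half
  rw [hsqrt, hΓa, hΓba, hΓb, hrefl_a, hrefl_half]
  have hPa : (ascPochhammer ℂ n).eval (1/2 - a) ≠ 0 := by
    have := ascPochhammer_eval_ne_zero_of_notNonposInt h2 n
    rw [hrefl_a] at this
    exact right_ne_zero_of_mul this
  have hPb := ascPochhammer_eval_ne_zero_of_notNonposInt h1 n
  rw [div_eq_div_iff (by apply_rules [mul_ne_zero, pow_ne_zero, neg_ne_zero.mpr one_ne_zero,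
    Gamma_ne_zero]) (mul_ne_zero hPb hPa)]
  ring

theorem stmt0_general (n : ℕ) (a b : ℂ)
    (h1 : NotNonposInt (b + 1/2)) (h2 : NotNonposInt (a - n + 1/2))
    (h4 : NotNonposInt (b - a + 1/2)) :
    hyp3F2 a b (-(n : ℂ)) (b + 1/2) (a - (n : ℂ) + 1/2) =
      (Real.sqrt Real.pi : ℂ) * Complex.Gamma (a - n + 1/2) * Complex.Gamma (b + 1/2) *
        Complex.Gamma (b - a + n + 1/2) /
      (Complex.Gamma (a + 1/2) * Complex.Gamma (1/2 - n) * Complex.Gamma (b - a + 1/2) *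
        Complex.Gamma (b + n + 1/2)) := by
  have hd : 1 + a + b - (b + 1/2) - n = a - n + 1/2 := by ring
  have hsaal := hyp3F2_saalschutz n a b (b + 1/2)
    (ascPochhammer_eval_ne_zero_of_notNonposInt h1 n)
    (hd ▸ ascPochhammer_eval_ne_zero_of_notNonposInt h2 n)
  rw [hd, show b + 1/2 - a - b = 1/2 - a by ring, show b + 1/2 - a = b - a + 1/2 by ring,
    show b + 1/2 - b = 1/2 by ring] at hsaal
  rw [hsaal, sqrt_pi_mul_Gamma_quotient_eq n a b h1 h2 h4]

theorem stmt0 (n : ℕ) (a b : ℂ)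
    (h1 : NotNonposInt (b + 1/2)) (h2 : NotNonposInt (a - n + 1/2))
    (h3 : NotNonposInt (a + 1/2)) (h4 : NotNonposInt (b - a + 1/2))
    (h5 : NotNonposInt (b + n + 1/2)) (h6 : NotNonposInt (b - a + n + 1/2)) :
    hyp3F2 a b (-(n : ℂ)) (b + 1/2) (a - (n : ℂ) + 1/2) =
      (Real.sqrt Real.pi : ℂ) * Complex.Gamma (a - n + 1/2) * Complex.Gamma (b + 1/2) *
        Complex.Gamma (b - a + n + 1/2) /
      (Complex.Gamma (a + 1/2) * Complex.Gamma (1/2 - n) * Complex.Gamma (b - a + 1/2) *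
        Complex.Gamma (b + n + 1/2)) :=
  stmt0_general n a b h1 h2 h4
end

section
/- Let n be a nonnegative integer and let a, s be complex numbers such that (a + 1)_k ≠ 0 and (−s(n + a) − n)_k ≠ 0 for all 0 ≤ k ≤ n, and (1 + s(a + n))_n ≠ 0 and a + n ≠ 0. Then the terminating series satisfies ₃F₂(−sa + s + 1, a − 1, −n; a + 1, −s(n + a) − n; 1) = a (1 + s + sn)_n (n + 1) / ( (1 + s(a + n))_n (a + n) ), where (x)_n denotes the Pochhammer symbol. -/
open Complex Finset

open Polynomial

/-- Splitting: `(x)_{m+k} = (x)_m (x+m)_k`. -/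
lemma pochSplit (m k : ℕ) (x : ℂ) :
    (ascPochhammer ℂ (m + k)).eval x
      = (ascPochhammer ℂ m).eval x * (ascPochhammer ℂ k).eval (x + m) := by
  rw [← ascPochhammer_mul, eval_mul, eval_comp, eval_add, eval_X, eval_natCast]

lemma pochOne (x : ℂ) : (ascPochhammer ℂ 1).eval x = x := by
  rw [ascPochhammer_one, eval_X]

/-- `(x)_{k+1} = x * (x+1)_k`. -/
lemma pochPeelLeft (k : ℕ) (x : ℂ) :
    (ascPochhammer ℂ (k + 1)).eval x = x * (ascPochhammer ℂ k).eval (x + 1) := by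
  have := pochSplit 1 k x
  rw [add_comm 1 k] at this
  rw [this, pochOne]
  norm_num

/-- `(-n)_k = (-1)^k k! C(n,k)` for `k ≤ n`. -/
lemma pochNegNat (n : ℕ) : ∀ k : ℕ, k ≤ n →
    (ascPochhammer ℂ k).eval (-(n : ℂ))
      = (-1)^k * (Nat.factorial k : ℂ) * (n.choose k : ℂ) := by
  intro k
  induction k with
  | zero => simp
  | succ k ih =>
    intro hk
    have hk' : k ≤ n := Nat.le_of_succ_le hk
    have hkn : k < n := hk
    rw [ascPochhammer_succ_eval, ih hk']
    have hcast : ((n - k : ℕ) : ℂ) = (n : ℂ) - (k : ℂ) := by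
      push_cast [Nat.cast_sub hk'] ; ring
    have hch : ((n.choose (k+1) : ℕ) : ℂ) * ((k : ℂ) + 1) = (n.choose k : ℂ) * ((n : ℂ) - (k : ℂ)) := by
      have h0 := Nat.choose_succ_right_eq n k
      have h2 : ((n.choose (k+1) * (k+1) : ℕ) : ℂ) = ((n.choose k * (n - k) : ℕ) : ℂ) := by
        exact_mod_cast congrArg (Nat.cast : ℕ → ℂ) h0
      push_cast [Nat.cast_sub hk'] at h2
      linear_combination h2
    rw [Nat.factorial_succ]
    push_cast
    linear_combination ((-1:ℂ))^k * (Nat.factorial k : ℂ) * hch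

/-- `(u+1)_n = (u+1)_{n-k} * (-1)^k * (-n-u)_k` for `k ≤ n`. -/
lemma pochRev (n : ℕ) (u : ℂ) : ∀ k : ℕ, k ≤ n →
    (ascPochhammer ℂ n).eval (u + 1)
      = (ascPochhammer ℂ (n - k)).eval (u + 1) * ((-1)^k *
          (ascPochhammer ℂ k).eval (-(n : ℂ) - u)) := by
  intro k
  induction k with
  | zero => simp
  | succ k ih =>
    intro hk
    have hk' : k ≤ n := Nat.le_of_succ_le hk
    have hnk : n - k = (n - (k + 1)) + 1 := by omega
    have hcast : ((n - (k+1) : ℕ) : ℂ) = (n : ℂ) - (k : ℂ) - 1 := by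
      rw [Nat.cast_sub hk]; push_cast; ring
    rw [ih hk', hnk, ascPochhammer_succ_eval, ascPochhammer_succ_eval, hcast]
    push_cast
    ring


/-- Chu–Vandermonde for rising factorials. -/
lemma chuVandermonde (x u : ℂ) : ∀ m : ℕ,
    ∑ j ∈ Finset.range (m + 1), (m.choose j : ℂ) * (ascPochhammer ℂ j).eval x *
      (ascPochhammer ℂ (m - j)).eval u = (ascPochhammer ℂ m).eval (x + u) := by
  intro m
  induction m with
  | zero => simp
  | succ m ih =>
    have e1 : ∑ j ∈ Finset.range (m + 2), ((m+1).choose j : ℂ) * (ascPochhammer ℂ j).eval x *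
        (ascPochhammer ℂ (m + 1 - j)).eval u
        = (∑ i ∈ Finset.range (m + 1), ((m+1).choose (i+1) : ℂ) * (ascPochhammer ℂ (i+1)).eval x *
            (ascPochhammer ℂ (m - i)).eval u) + (ascPochhammer ℂ (m+1)).eval u := by
      rw [Finset.sum_range_succ']
      simp only [Nat.choose_zero_right, Nat.cast_one, ascPochhammer_zero, Polynomial.eval_one,
        Nat.sub_zero, one_mul, mul_one]
      congr 1
      apply Finset.sum_congr rfl
      intro i hi
      have : m + 1 - (i + 1) = m - i := by omega
      rw [this]
    have e2 : ∀ i ∈ Finset.range (m+1),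
        ((m+1).choose (i+1) : ℂ) * (ascPochhammer ℂ (i+1)).eval x * (ascPochhammer ℂ (m - i)).eval u
        = (m.choose i : ℂ) * (ascPochhammer ℂ (i+1)).eval x * (ascPochhammer ℂ (m - i)).eval u
          + (m.choose (i+1) : ℂ) * (ascPochhammer ℂ (i+1)).eval x * (ascPochhammer ℂ (m - i)).eval u := by
      intro i hi
      rw [Nat.choose_succ_succ]
      push_cast
      ring
    have e3 : (∑ i ∈ Finset.range (m + 1), (m.choose (i+1) : ℂ) * (ascPochhammer ℂ (i+1)).eval x *
            (ascPochhammer ℂ (m - i)).eval u) + (ascPochhammer ℂ (m+1)).eval u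
        = ∑ j ∈ Finset.range (m + 1), (m.choose j : ℂ) * (ascPochhammer ℂ j).eval x *
            (ascPochhammer ℂ (m + 1 - j)).eval u := by
      have e4 := Finset.sum_range_succ' (fun j => (m.choose j : ℂ) * (ascPochhammer ℂ j).eval x *
            (ascPochhammer ℂ (m + 1 - j)).eval u) (m+1)
      have e5 := Finset.sum_range_succ (fun j => (m.choose j : ℂ) * (ascPochhammer ℂ j).eval x *
            (ascPochhammer ℂ (m + 1 - j)).eval u) (m+1)
      simp only [Nat.choose_succ_self, Nat.cast_zero, zero_mul, add_zero] at e5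
      rw [e5] at e4
      rw [e4]
      congr 1
      · apply Finset.sum_congr rfl
        intro i hi
        have : m + 1 - (i + 1) = m - i := by omega
        rw [this]
      · simp
    have e6 : ∀ j ∈ Finset.range (m+1),
        (m.choose j : ℂ) * (ascPochhammer ℂ (j+1)).eval x * (ascPochhammer ℂ (m - j)).eval u
          + (m.choose j : ℂ) * (ascPochhammer ℂ j).eval x * (ascPochhammer ℂ (m + 1 - j)).eval u
        = ((m.choose j : ℂ) * (ascPochhammer ℂ j).eval x * (ascPochhammer ℂ (m - j)).eval u)
            * (x + u + m) := by
      intro j hj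
      have hj' : j ≤ m := by simpa [Nat.lt_succ_iff] using hj
      have hm1 : m + 1 - j = (m - j) + 1 := by omega
      have hcast : ((m - j : ℕ) : ℂ) = (m : ℂ) - (j : ℂ) := by
        rw [Nat.cast_sub hj']
      rw [hm1, ascPochhammer_succ_eval, ascPochhammer_succ_eval, hcast]
      ring
    calc ∑ j ∈ Finset.range (m + 1 + 1), ((m+1).choose j : ℂ) * (ascPochhammer ℂ j).eval x *
        (ascPochhammer ℂ (m + 1 - j)).eval u
        = (∑ i ∈ Finset.range (m + 1), ((m+1).choose (i+1) : ℂ) * (ascPochhammer ℂ (i+1)).eval x *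
            (ascPochhammer ℂ (m - i)).eval u) + (ascPochhammer ℂ (m+1)).eval u := e1
      _ = (∑ i ∈ Finset.range (m + 1), ((m.choose i : ℂ) * (ascPochhammer ℂ (i+1)).eval x *
              (ascPochhammer ℂ (m - i)).eval u
            + (m.choose (i+1) : ℂ) * (ascPochhammer ℂ (i+1)).eval x *
              (ascPochhammer ℂ (m - i)).eval u)) + (ascPochhammer ℂ (m+1)).eval u := by
          rw [Finset.sum_congr rfl e2]
      _ = (∑ i ∈ Finset.range (m + 1), (m.choose i : ℂ) * (ascPochhammer ℂ (i+1)).eval x *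
              (ascPochhammer ℂ (m - i)).eval u)
          + ((∑ i ∈ Finset.range (m + 1), (m.choose (i+1) : ℂ) * (ascPochhammer ℂ (i+1)).eval x *
              (ascPochhammer ℂ (m - i)).eval u) + (ascPochhammer ℂ (m+1)).eval u) := by
          rw [Finset.sum_add_distrib]; ring
      _ = (∑ i ∈ Finset.range (m + 1), (m.choose i : ℂ) * (ascPochhammer ℂ (i+1)).eval x *
              (ascPochhammer ℂ (m - i)).eval u)
          + ∑ j ∈ Finset.range (m + 1), (m.choose j : ℂ) * (ascPochhammer ℂ j).eval x *
              (ascPochhammer ℂ (m + 1 - j)).eval u := by rw [e3]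
      _ = ∑ j ∈ Finset.range (m + 1), ((m.choose j : ℂ) * (ascPochhammer ℂ j).eval x *
              (ascPochhammer ℂ (m - j)).eval u) * (x + u + m) := by
          rw [← Finset.sum_add_distrib, Finset.sum_congr rfl e6]
      _ = (∑ j ∈ Finset.range (m + 1), (m.choose j : ℂ) * (ascPochhammer ℂ j).eval x *
              (ascPochhammer ℂ (m - j)).eval u) * (x + u + m) := by
          rw [Finset.sum_mul]
      _ = (ascPochhammer ℂ (m+1)).eval (x + u) := by
          rw [ih, ascPochhammer_succ_eval]

lemma pochNegZero (n k : ℕ) (h : n < k) : (ascPochhammer ℂ k).eval (-(n : ℂ)) = 0 := by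
  have hk : k = (n + 1) + (k - (n+1)) := by omega
  rw [hk, pochSplit, ascPochhammer_succ_eval]
  simp

/-- Telescoping core. -/
lemma F3 (n k : ℕ) (a : ℂ) (hk : k ≤ n) :
    a * (ascPochhammer ℂ k).eval (a+1) *
      ((ascPochhammer ℂ k).eval (a-1) * (ascPochhammer ℂ (n+1-k)).eval (a+(k:ℂ))
        - (ascPochhammer ℂ (k+1)).eval (a-1) * (ascPochhammer ℂ (n-k)).eval (a+(k:ℂ)+1))
    = (ascPochhammer ℂ (n+1)).eval a * (ascPochhammer ℂ k).eval (a-1) := by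
  have hidx1 : k + (n+1-k) = n + 1 := by omega
  have s1 : (ascPochhammer ℂ (n+1)).eval a
      = (ascPochhammer ℂ k).eval a * (ascPochhammer ℂ (n+1-k)).eval (a+(k:ℂ)) := by
    have := pochSplit k (n+1-k) a
    rw [hidx1] at this
    exact this
  have s3 : (ascPochhammer ℂ (k+1)).eval a = a * (ascPochhammer ℂ k).eval (a+1) :=
    pochPeelLeft k a
  have s4 : (ascPochhammer ℂ (k+1)).eval (a-1) = (ascPochhammer ℂ k).eval (a-1) * (a-1+(k:ℂ)) :=
    ascPochhammer_succ_eval k (a-1)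
  have s5 : (ascPochhammer ℂ (k+1)).eval a = (ascPochhammer ℂ k).eval a * (a+(k:ℂ)) :=
    ascPochhammer_succ_eval k a
  have hidx2 : n + 1 - k = (n - k) + 1 := by omega
  have s6 : (ascPochhammer ℂ (n+1-k)).eval (a+(k:ℂ))
      = (a+(k:ℂ)) * (ascPochhammer ℂ (n-k)).eval (a+(k:ℂ)+1) := by
    rw [hidx2, pochPeelLeft]
  rw [s6, s4, s1, s6]
  have s7 : a * (ascPochhammer ℂ k).eval (a+1) = (ascPochhammer ℂ k).eval a * (a+(k:ℂ)) := by
    rw [← s3, s5]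
  linear_combination ((ascPochhammer ℂ k).eval (a-1) * (a+(k:ℂ)) * (ascPochhammer ℂ (n-k)).eval (a+(k:ℂ)+1)
      - (ascPochhammer ℂ k).eval (a-1) * (a-1+(k:ℂ)) * (ascPochhammer ℂ (n-k)).eval (a+(k:ℂ)+1)) * s7

/-- Pointwise rewriting of the series term. -/
lemma L1 (n k : ℕ) (a s : ℂ) (hk : k ≤ n)
    (hb1 : (ascPochhammer ℂ k).eval (a + 1) ≠ 0)
    (hb2 : (ascPochhammer ℂ k).eval (-s*((n : ℂ) + a) - (n : ℂ)) ≠ 0) :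
    ((ascPochhammer ℂ k).eval (-s*a + s + 1) * (ascPochhammer ℂ k).eval (a - 1) *
        (ascPochhammer ℂ k).eval (-(n : ℂ))) /
      ((ascPochhammer ℂ k).eval (a + 1) * (ascPochhammer ℂ k).eval (-s*((n : ℂ) + a) - (n : ℂ)) *
        (Nat.factorial k : ℂ))
      * ((ascPochhammer ℂ n).eval (s*(a + (n : ℂ)) + 1) * (ascPochhammer ℂ (n+1)).eval a)
    = a * ((n.choose k : ℂ) * (ascPochhammer ℂ k).eval (-s*a + s + 1) *
          (ascPochhammer ℂ (n-k)).eval (s*(a + (n : ℂ)) + 1)) *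
        ((ascPochhammer ℂ k).eval (a-1) * (ascPochhammer ℂ (n+1-k)).eval (a+(k:ℂ))
          - (ascPochhammer ℂ (k+1)).eval (a-1) * (ascPochhammer ℂ (n-k)).eval (a+(k:ℂ)+1)) := by
  have hF2 := pochNegNat n k hk
  have hF1 := pochRev n (s*(a + (n : ℂ))) k hk
  have harg : -(n : ℂ) - s*(a + (n : ℂ)) = -s*((n : ℂ) + a) - (n : ℂ) := by ring
  rw [harg] at hF1
  have hF3 := F3 n k a hk
  have hfac : (Nat.factorial k : ℂ) ≠ 0 := by
    exact_mod_cast Nat.cast_ne_zero.mpr (Nat.factorial_ne_zero k)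
  have hD : (ascPochhammer ℂ k).eval (a + 1) *
      (ascPochhammer ℂ k).eval (-s*((n : ℂ) + a) - (n : ℂ)) * (Nat.factorial k : ℂ) ≠ 0 :=
    mul_ne_zero (mul_ne_zero hb1 hb2) hfac
  rw [hF2, hF1, div_mul_eq_mul_div, div_eq_iff hD]
  have hsq : ((-1 : ℂ))^k * ((-1 : ℂ))^k = 1 := by
    rw [← mul_pow]; norm_num
  linear_combination ((Nat.factorial k : ℂ) * (n.choose k : ℂ) *
      (ascPochhammer ℂ k).eval (-s*a + s + 1) * (ascPochhammer ℂ k).eval (a-1) *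
      (ascPochhammer ℂ (n-k)).eval (s*(a + (n : ℂ)) + 1) *
      (ascPochhammer ℂ k).eval (-s*((n : ℂ) + a) - (n : ℂ)) *
      (ascPochhammer ℂ (n+1)).eval a) * hsq
    - ((Nat.factorial k : ℂ) * (n.choose k : ℂ) *
      (ascPochhammer ℂ k).eval (-s*a + s + 1) *
      (ascPochhammer ℂ (n-k)).eval (s*(a + (n : ℂ)) + 1) *
      (ascPochhammer ℂ k).eval (-s*((n : ℂ) + a) - (n : ℂ))) * hF3

/-- The collapsed form of consecutive differences. -/
lemma L3 (n i : ℕ) (a s : ℂ) (hi : i < n) :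
    ((n.choose (i+1) : ℂ) * (ascPochhammer ℂ (i+1)).eval (-s*a + s + 1) *
        (ascPochhammer ℂ (n-(i+1))).eval (s*(a + (n : ℂ)) + 1)
      - (n.choose i : ℂ) * (ascPochhammer ℂ i).eval (-s*a + s + 1) *
        (ascPochhammer ℂ (n-i)).eval (s*(a + (n : ℂ)) + 1))
      * ((ascPochhammer ℂ (i+1)).eval (a-1) * (ascPochhammer ℂ (n-i)).eval (a+(i:ℂ)+1))
    = (ascPochhammer ℂ (n+1)).eval a * (((n+1).choose (i+1) : ℂ) *
        (ascPochhammer ℂ (i+1)).eval (s - s*a) *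
        (ascPochhammer ℂ (n-1-i)).eval (s*(a + (n : ℂ)) + 1)) := by
  have hc : (ascPochhammer ℂ (i+1)).eval (-s*a + s + 1)
      = (ascPochhammer ℂ i).eval (-s*a + s + 1) * (-s*a + s + 1 + (i:ℂ)) :=
    ascPochhammer_succ_eval i _
  have hidx1 : n - (i+1) = n - 1 - i := by omega
  have hidx2 : n - i = (n - 1 - i) + 1 := by omega
  have hcast : ((n - 1 - i : ℕ) : ℂ) = (n : ℂ) - 1 - (i : ℂ) := by
    have : ((n - 1 - i : ℕ) : ℂ) = ((n - (i+1) : ℕ) : ℂ) := by rw [← hidx1]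
    rw [this, Nat.cast_sub hi]
    push_cast; ring
  have hu : (ascPochhammer ℂ (n-i)).eval (s*(a + (n : ℂ)) + 1)
      = (ascPochhammer ℂ (n-1-i)).eval (s*(a + (n : ℂ)) + 1) *
          (s*(a + (n : ℂ)) + 1 + ((n : ℂ) - 1 - (i : ℂ))) := by
    rw [hidx2, ascPochhammer_succ_eval, hcast]
  have hx : (ascPochhammer ℂ (i+1)).eval (s - s*a)
      = (s - s*a) * (ascPochhammer ℂ i).eval (-s*a + s + 1) := by
    rw [pochPeelLeft]
    have : s - s*a + 1 = -s*a + s + 1 := by ring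
    rw [this]
  have hidx3 : (i+1) + (n-i) = n + 1 := by omega
  have ha1 : (ascPochhammer ℂ (n+1)).eval a
      = (ascPochhammer ℂ (i+1)).eval a * (ascPochhammer ℂ (n-i)).eval (a+(i:ℂ)+1) := by
    have h := pochSplit (i+1) (n-i) a
    rw [hidx3] at h
    have harg : a + ((i+1 : ℕ) : ℂ) = a + (i:ℂ) + 1 := by push_cast; ring
    rw [harg] at h
    exact h
  have hp : (ascPochhammer ℂ (i+1)).eval (a-1) * (a + (i:ℂ))
      = (a-1) * (ascPochhammer ℂ (i+1)).eval a := by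
    have e1 : (ascPochhammer ℂ (i+2)).eval (a-1)
        = (ascPochhammer ℂ (i+1)).eval (a-1) * (a - 1 + ((i:ℂ)+1)) := by
      have h := ascPochhammer_succ_eval (i+1) (a-1)
      have harg : a - 1 + ((i+1 : ℕ) : ℂ) = a - 1 + ((i:ℂ)+1) := by push_cast; ring
      rw [harg] at h
      exact h
    have e2 : (ascPochhammer ℂ (i+2)).eval (a-1)
        = (a-1) * (ascPochhammer ℂ (i+1)).eval a := by
      have := pochPeelLeft (i+1) (a-1)
      rw [this]
      norm_num
    have e3 := e1.symm.trans e2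
    linear_combination e3
  have hA : ((n:ℂ)+1) * (n.choose i : ℂ) = ((n+1).choose (i+1) : ℂ) * ((i:ℂ)+1) := by
    have := Nat.add_one_mul_choose_eq n i
    have h2 : (((n+1) * n.choose i : ℕ) : ℂ) = (((n+1).choose (i+1) * (i+1) : ℕ) : ℂ) := by
      exact_mod_cast congrArg (Nat.cast : ℕ → ℂ) this
    push_cast at h2
    linear_combination h2
  have hB : ((n:ℂ)+1) * (n.choose (i+1) : ℂ) = ((n+1).choose (i+1) : ℂ) * ((n:ℂ)-(i:ℂ)) := by
    have hpascal : ((n+1).choose (i+1) : ℕ) = n.choose i + n.choose (i+1) := Nat.choose_succ_succ n i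
    have h2 : (((n+1).choose (i+1) : ℕ) : ℂ) = (n.choose i : ℂ) + (n.choose (i+1) : ℂ) := by
      exact_mod_cast congrArg (Nat.cast : ℕ → ℂ) hpascal
    linear_combination (-(n:ℂ)-1) * h2 - hA
  -- now the main computation, scaled by (n+1)
  have hn1 : ((n:ℂ)+1) ≠ 0 := by
    intro h
    have : ((n:ℂ)+1) = ((n+1 : ℕ) : ℂ) := by push_cast; ring
    rw [this] at h
    exact (Nat.cast_ne_zero.mpr (Nat.succ_ne_zero n)) h
  apply mul_left_cancel₀ hn1
  rw [hidx1, hc, hu, hx, ha1]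
  linear_combination
    ((ascPochhammer ℂ i).eval (-s*a + s + 1) * (-s*a + s + 1 + (i:ℂ)) *
      (ascPochhammer ℂ (n-1-i)).eval (s*(a + (n : ℂ)) + 1) *
      (ascPochhammer ℂ (i+1)).eval (a-1) * (ascPochhammer ℂ (n-i)).eval (a+(i:ℂ)+1)) * hB
    - ((ascPochhammer ℂ i).eval (-s*a + s + 1) *
      (ascPochhammer ℂ (n-1-i)).eval (s*(a + (n : ℂ)) + 1) *
      (s*(a + (n : ℂ)) + 1 + ((n : ℂ) - 1 - (i : ℂ))) *
      (ascPochhammer ℂ (i+1)).eval (a-1) * (ascPochhammer ℂ (n-i)).eval (a+(i:ℂ)+1)) * hA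
    - (((n+1).choose (i+1) : ℂ) * s * ((n:ℂ)+1) *
      (ascPochhammer ℂ i).eval (-s*a + s + 1) *
      (ascPochhammer ℂ (n-1-i)).eval (s*(a + (n : ℂ)) + 1) *
      (ascPochhammer ℂ (n-i)).eval (a+(i:ℂ)+1)) * hp

/-- Summed identity. -/
lemma mainSum (n : ℕ) (a s : ℂ)
    (h1 : ∀ k ≤ n, (ascPochhammer ℂ k).eval (a + 1) ≠ 0)
    (h2 : ∀ k ≤ n, (ascPochhammer ℂ k).eval (-s*((n : ℂ) + a) - (n : ℂ)) ≠ 0) :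
    (∑ k ∈ Finset.range (n+1),
      ((ascPochhammer ℂ k).eval (-s*a + s + 1) * (ascPochhammer ℂ k).eval (a - 1) *
        (ascPochhammer ℂ k).eval (-(n : ℂ))) /
      ((ascPochhammer ℂ k).eval (a + 1) * (ascPochhammer ℂ k).eval (-s*((n : ℂ) + a) - (n : ℂ)) *
        (Nat.factorial k : ℂ)))
      * ((ascPochhammer ℂ n).eval (s*(a + (n : ℂ)) + 1) * (ascPochhammer ℂ (n+1)).eval a)
    = a * ((ascPochhammer ℂ (n+1)).eval a *
        ((ascPochhammer ℂ n).eval (s*(a + (n : ℂ)) + 1)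
          + ∑ i ∈ Finset.range n, ((n+1).choose (i+1) : ℂ) *
              (ascPochhammer ℂ (i+1)).eval (s - s*a) *
              (ascPochhammer ℂ (n-1-i)).eval (s*(a + (n : ℂ)) + 1))
        - (ascPochhammer ℂ n).eval (-s*a + s + 1) * (ascPochhammer ℂ (n+1)).eval (a-1)) := by
  -- abbreviations
  set M : ℕ → ℂ := fun k => (n.choose k : ℂ) * (ascPochhammer ℂ k).eval (-s*a + s + 1) *
      (ascPochhammer ℂ (n-k)).eval (s*(a + (n : ℂ)) + 1) with hM
  set E : ℕ → ℂ := fun j => (ascPochhammer ℂ j).eval (a-1) *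
      (ascPochhammer ℂ (n+1-j)).eval (a+(j:ℂ)) with hE
  rw [Finset.sum_mul]
  have step1 : ∀ k ∈ Finset.range (n+1),
      ((ascPochhammer ℂ k).eval (-s*a + s + 1) * (ascPochhammer ℂ k).eval (a - 1) *
        (ascPochhammer ℂ k).eval (-(n : ℂ))) /
      ((ascPochhammer ℂ k).eval (a + 1) * (ascPochhammer ℂ k).eval (-s*((n : ℂ) + a) - (n : ℂ)) *
        (Nat.factorial k : ℂ))
      * ((ascPochhammer ℂ n).eval (s*(a + (n : ℂ)) + 1) * (ascPochhammer ℂ (n+1)).eval a)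
      = a * M k * E k - a * M k * E (k+1) := by
    intro k hk
    have hk' : k ≤ n := by simpa [Nat.lt_succ_iff] using hk
    have hL1 := L1 n k a s hk' (h1 k hk') (h2 k hk')
    rw [hL1, hM, hE]
    simp only []
    have hidx : n + 1 - (k+1) = n - k := by omega
    have hcast : a + ((k+1 : ℕ) : ℂ) = a + (k:ℂ) + 1 := by push_cast; ring
    rw [hidx, hcast]
    ring
  rw [Finset.sum_congr rfl step1, Finset.sum_sub_distrib]
  have peel1 : ∑ k ∈ Finset.range (n+1), a * M k * E k
      = (∑ i ∈ Finset.range n, a * M (i+1) * E (i+1)) + a * M 0 * E 0 :=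
    Finset.sum_range_succ' _ n
  have peel2 : ∑ k ∈ Finset.range (n+1), a * M k * E (k+1)
      = (∑ i ∈ Finset.range n, a * M i * E (i+1)) + a * M n * E (n+1) :=
    Finset.sum_range_succ _ n
  rw [peel1, peel2]
  have diff : (∑ i ∈ Finset.range n, a * M (i+1) * E (i+1))
      - (∑ i ∈ Finset.range n, a * M i * E (i+1))
      = ∑ i ∈ Finset.range n, a * ((M (i+1) - M i) * E (i+1)) := by
    rw [← Finset.sum_sub_distrib]
    apply Finset.sum_congr rfl
    intro i hi
    ring
  have step3 : ∀ i ∈ Finset.range n, a * ((M (i+1) - M i) * E (i+1))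
      = a * ((ascPochhammer ℂ (n+1)).eval a * (((n+1).choose (i+1) : ℂ) *
          (ascPochhammer ℂ (i+1)).eval (s - s*a) *
          (ascPochhammer ℂ (n-1-i)).eval (s*(a + (n : ℂ)) + 1))) := by
    intro i hi
    have hi' : i < n := by simpa using hi
    have hL3 := L3 n i a s hi'
    rw [hM, hE]
    simp only []
    have hidx : n + 1 - (i+1) = n - i := by omega
    have hcast : a + ((i+1 : ℕ) : ℂ) = a + (i:ℂ) + 1 := by push_cast; ring
    rw [hidx, hcast]
    rw [← hL3]
  have hM0E0 : a * M 0 * E 0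
      = a * ((ascPochhammer ℂ n).eval (s*(a + (n : ℂ)) + 1) * (ascPochhammer ℂ (n+1)).eval a) := by
    rw [hM, hE]
    simp
    ring
  have hMnE : a * M n * E (n+1)
      = a * ((ascPochhammer ℂ n).eval (-s*a + s + 1) * (ascPochhammer ℂ (n+1)).eval (a-1)) := by
    rw [hM, hE]
    simp
    ring
  calc (∑ i ∈ Finset.range n, a * M (i+1) * E (i+1)) + a * M 0 * E 0
        - ((∑ i ∈ Finset.range n, a * M i * E (i+1)) + a * M n * E (n+1))
      = ((∑ i ∈ Finset.range n, a * M (i+1) * E (i+1))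
          - (∑ i ∈ Finset.range n, a * M i * E (i+1))) + a * M 0 * E 0 - a * M n * E (n+1) := by
        ring
    _ = (∑ i ∈ Finset.range n, a * ((ascPochhammer ℂ (n+1)).eval a * (((n+1).choose (i+1) : ℂ) *
          (ascPochhammer ℂ (i+1)).eval (s - s*a) *
          (ascPochhammer ℂ (n-1-i)).eval (s*(a + (n : ℂ)) + 1))))
          + a * M 0 * E 0 - a * M n * E (n+1) := by
        rw [diff, Finset.sum_congr rfl step3]
    _ = a * ((ascPochhammer ℂ (n+1)).eval a *
        ((ascPochhammer ℂ n).eval (s*(a + (n : ℂ)) + 1)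
          + ∑ i ∈ Finset.range n, ((n+1).choose (i+1) : ℂ) *
              (ascPochhammer ℂ (i+1)).eval (s - s*a) *
              (ascPochhammer ℂ (n-1-i)).eval (s*(a + (n : ℂ)) + 1))
        - (ascPochhammer ℂ n).eval (-s*a + s + 1) * (ascPochhammer ℂ (n+1)).eval (a-1)) := by
        rw [hM0E0, hMnE]
        have hS : (∑ i ∈ Finset.range n, a * ((ascPochhammer ℂ (n+1)).eval a *
              (((n+1).choose (i+1) : ℂ) * (ascPochhammer ℂ (i+1)).eval (s - s*a) *
              (ascPochhammer ℂ (n-1-i)).eval (s*(a + (n : ℂ)) + 1))))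
            = a * (ascPochhammer ℂ (n+1)).eval a *
              (∑ i ∈ Finset.range n, ((n+1).choose (i+1) : ℂ) *
                (ascPochhammer ℂ (i+1)).eval (s - s*a) *
                (ascPochhammer ℂ (n-1-i)).eval (s*(a + (n : ℂ)) + 1)) := by
          rw [Finset.mul_sum]
          exact Finset.sum_congr rfl (fun i _ => by ring)
        rw [hS]
        ring

/-- Chu–Vandermonde consequence used at the last step. -/
lemma step4CV (n : ℕ) (a s : ℂ) :
    s*(a + (n : ℂ)) * ((ascPochhammer ℂ n).eval (s*(a + (n : ℂ)) + 1)
      + ∑ i ∈ Finset.range n, ((n+1).choose (i+1) : ℂ) *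
          (ascPochhammer ℂ (i+1)).eval (s - s*a) *
          (ascPochhammer ℂ (n-1-i)).eval (s*(a + (n : ℂ)) + 1))
    = (ascPochhammer ℂ (n+1)).eval ((s - s*a) + s*(a + (n : ℂ)))
      - (ascPochhammer ℂ (n+1)).eval (s - s*a) := by
  have hCV := chuVandermonde (s - s*a) (s*(a + (n : ℂ))) (n+1)
  rw [Finset.sum_range_succ'] at hCV
  rw [Finset.sum_range_succ] at hCV
  simp only [Nat.choose_zero_right, Nat.cast_one, ascPochhammer_zero, Polynomial.eval_one,
    Nat.sub_zero, one_mul, mul_one, Nat.choose_self, Nat.sub_self] at hCV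
  -- hCV : ∑_{i∈range n} C(n+1,i+1) (x)_{i+1} (u)_{n+1-(i+1)} + (x)_{n+1} * 1? + (u)_{n+1} = (x+u)_{n+1}
  have hterm : ∀ i ∈ Finset.range n,
      ((n+1).choose (i+1) : ℂ) * (ascPochhammer ℂ (i+1)).eval (s - s*a) *
        (ascPochhammer ℂ (n+1-(i+1))).eval (s*(a + (n : ℂ)))
      = s*(a + (n : ℂ)) * (((n+1).choose (i+1) : ℂ) * (ascPochhammer ℂ (i+1)).eval (s - s*a) *
          (ascPochhammer ℂ (n-1-i)).eval (s*(a + (n : ℂ)) + 1)) := by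
    intro i hi
    have hi' : i < n := by simpa using hi
    have hidx : n + 1 - (i+1) = (n-1-i) + 1 := by omega
    rw [hidx, pochPeelLeft (n-1-i) (s*(a + (n : ℂ)))]
    ring
  rw [Finset.sum_congr rfl hterm] at hCV
  have hpeel : (ascPochhammer ℂ (n+1)).eval (s*(a + (n : ℂ)))
      = s*(a + (n : ℂ)) * (ascPochhammer ℂ n).eval (s*(a + (n : ℂ)) + 1) := pochPeelLeft n _
  rw [hpeel] at hCV
  rw [mul_add, Finset.mul_sum]
  linear_combination hCV

theorem stmt7 (n : ℕ) (a s : ℂ)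
    (h1 : ∀ k ≤ n, (ascPochhammer ℂ k).eval (a + 1) ≠ 0)
    (h2 : ∀ k ≤ n, (ascPochhammer ℂ k).eval (-s*((n : ℂ) + a) - (n : ℂ)) ≠ 0)
    (h3 : (ascPochhammer ℂ n).eval (1 + s*(a + (n : ℂ))) ≠ 0)
    (h4 : a + (n : ℂ) ≠ 0) :
    hyp3F2 (-s*a + s + 1) (a - 1) (-(n : ℂ)) (a + 1) (-s*((n : ℂ) + a) - (n : ℂ)) =
      a * (ascPochhammer ℂ n).eval (1 + s + s*(n : ℂ)) * ((n : ℂ) + 1) /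
        ((ascPochhammer ℂ n).eval (1 + s*(a + (n : ℂ))) * (a + (n : ℂ))) := by
  have hden : (ascPochhammer ℂ n).eval (1 + s*(a + (n : ℂ))) * (a + (n : ℂ)) ≠ 0 :=
    mul_ne_zero h3 h4
  have htsum : hyp3F2 (-s*a + s + 1) (a - 1) (-(n : ℂ)) (a + 1) (-s*((n : ℂ) + a) - (n : ℂ))
      = ∑ k ∈ Finset.range (n+1),
        ((ascPochhammer ℂ k).eval (-s*a + s + 1) * (ascPochhammer ℂ k).eval (a - 1) *
          (ascPochhammer ℂ k).eval (-(n : ℂ))) /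
        ((ascPochhammer ℂ k).eval (a + 1) * (ascPochhammer ℂ k).eval (-s*((n : ℂ) + a) - (n : ℂ)) *
          (Nat.factorial k : ℂ)) := by
    apply tsum_eq_sum
    intro k hk
    have hnk : n < k := by
      simp only [Finset.mem_range] at hk
      omega
    rw [pochNegZero n k hnk]
    simp
  rw [htsum, eq_div_iff hden]
  have harg1 : (1 : ℂ) + s*(a + (n : ℂ)) = s*(a + (n : ℂ)) + 1 := by ring
  rw [harg1]
  rcases eq_or_ne a 0 with rfl | ha
  · -- a = 0
    have hn : n ≠ 0 := by
      intro h
      rw [h] at h4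
      simp at h4
    have hT : (∑ k ∈ Finset.range (n+1),
        ((ascPochhammer ℂ k).eval (-s*0 + s + 1) * (ascPochhammer ℂ k).eval (0 - 1) *
          (ascPochhammer ℂ k).eval (-(n : ℂ))) /
        ((ascPochhammer ℂ k).eval (0 + 1) * (ascPochhammer ℂ k).eval (-s*((n : ℂ) + 0) - (n : ℂ)) *
          (Nat.factorial k : ℂ))) = 0 := by
      rw [Finset.sum_range_succ']
      have hf0 : ((ascPochhammer ℂ 0).eval (-s*0 + s + 1) * (ascPochhammer ℂ 0).eval (0 - 1) *
          (ascPochhammer ℂ 0).eval (-(n : ℂ))) /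
        ((ascPochhammer ℂ 0).eval (0 + 1) * (ascPochhammer ℂ 0).eval (-s*((n : ℂ) + 0) - (n : ℂ)) *
          (Nat.factorial 0 : ℂ)) = 1 := by
        simp
      have hfs : (∑ i ∈ Finset.range n,
          ((ascPochhammer ℂ (i+1)).eval (-s*0 + s + 1) * (ascPochhammer ℂ (i+1)).eval (0 - 1) *
            (ascPochhammer ℂ (i+1)).eval (-(n : ℂ))) /
          ((ascPochhammer ℂ (i+1)).eval (0 + 1) *
            (ascPochhammer ℂ (i+1)).eval (-s*((n : ℂ) + 0) - (n : ℂ)) *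
            (Nat.factorial (i+1) : ℂ))) = -1 := by
        rw [Finset.sum_eq_single_of_mem 0 (Finset.mem_range.mpr (Nat.pos_of_ne_zero hn))]
        · -- the i = 0 term equals -1
          have hd1 := h2 1 (Nat.one_le_iff_ne_zero.mpr hn)
          rw [pochOne] at hd1
          simp only [zero_add, pochOne, Nat.factorial_one, Nat.cast_one]
          rw [div_eq_iff (by
            apply mul_ne_zero (mul_ne_zero _ hd1) one_ne_zero
            norm_num)]
          ring
        · intro b _ hb
          have hb1 : 1 ≤ b := Nat.one_le_iff_ne_zero.mpr hb
          have hzero : (ascPochhammer ℂ (b+1)).eval ((0:ℂ) - 1) = 0 := by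
            have hsplit : (2 : ℕ) + (b - 1) = b + 1 := by omega
            have := pochSplit 2 (b-1) ((0:ℂ) - 1)
            rw [hsplit] at this
            rw [this]
            have h2e : (ascPochhammer ℂ 2).eval ((0:ℂ) - 1) = 0 := by
              rw [ascPochhammer_succ_eval, pochOne]
              push_cast
              ring
            rw [h2e]
            ring
          rw [hzero]
          simp
      rw [hfs, hf0]
      ring
    rw [hT]
    ring
  · -- a ≠ 0
    have hkey := mainSum n a s h1 h2
    have hA : (ascPochhammer ℂ (n+1)).eval a ≠ 0 := by
      rw [pochPeelLeft]
      exact mul_ne_zero ha (h1 n le_rfl)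
    apply mul_right_cancel₀ hA
    have hsw : (∑ k ∈ Finset.range (n+1),
        ((ascPochhammer ℂ k).eval (-s*a + s + 1) * (ascPochhammer ℂ k).eval (a - 1) *
          (ascPochhammer ℂ k).eval (-(n : ℂ))) /
        ((ascPochhammer ℂ k).eval (a + 1) * (ascPochhammer ℂ k).eval (-s*((n : ℂ) + a) - (n : ℂ)) *
          (Nat.factorial k : ℂ)))
        * ((ascPochhammer ℂ n).eval (s*(a + (n : ℂ)) + 1) * (a + (n : ℂ)))
        * (ascPochhammer ℂ (n+1)).eval a
      = (∑ k ∈ Finset.range (n+1),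
        ((ascPochhammer ℂ k).eval (-s*a + s + 1) * (ascPochhammer ℂ k).eval (a - 1) *
          (ascPochhammer ℂ k).eval (-(n : ℂ))) /
        ((ascPochhammer ℂ k).eval (a + 1) * (ascPochhammer ℂ k).eval (-s*((n : ℂ) + a) - (n : ℂ)) *
          (Nat.factorial k : ℂ)))
        * ((ascPochhammer ℂ n).eval (s*(a + (n : ℂ)) + 1) * (ascPochhammer ℂ (n+1)).eval a)
        * (a + (n : ℂ)) := by ring
    rw [hsw, hkey]
    -- remaining: a * (PA * B - Cn * Pm1) * (a + n) = a * W * (n+1) * PA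
    have hs1 : (ascPochhammer ℂ (n+1)).eval a
        = (ascPochhammer ℂ n).eval a * (a + (n:ℂ)) := ascPochhammer_succ_eval n a
    have hs2 : (ascPochhammer ℂ (n+1)).eval (a-1)
        = (a-1) * (ascPochhammer ℂ n).eval a := by
      rw [pochPeelLeft]
      have : a - 1 + 1 = a := by ring
      rw [this]
    rcases eq_or_ne s 0 with rfl | hs
    · -- s = 0
      have hzero : ∀ i ∈ Finset.range n,
          ((n+1).choose (i+1) : ℂ) * (ascPochhammer ℂ (i+1)).eval ((0:ℂ) - 0*a) *
            (ascPochhammer ℂ (n-1-i)).eval (0*(a + (n : ℂ)) + 1) = 0 := by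
        intro i _
        have : (ascPochhammer ℂ (i+1)).eval ((0:ℂ) - 0*a) = 0 := by
          rw [pochPeelLeft]
          ring_nf
        rw [this]
        ring
      rw [Finset.sum_eq_zero hzero]
      have harga : (0:ℂ)*(a + (n : ℂ)) + 1 = 1 + 0 + 0*(n:ℂ) := by ring
      have hargb : -(0:ℂ)*a + 0 + 1 = 1 + 0 + 0*(n:ℂ) := by ring
      rw [harga, hargb, hs1, hs2]
      ring
    · -- s ≠ 0
      have hu : s*(a + (n : ℂ)) ≠ 0 := mul_ne_zero hs h4
      apply mul_left_cancel₀ hu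
      have hstep4 := step4CV n a s
      have hs3 : (ascPochhammer ℂ (n+1)).eval ((s - s*a) + s*(a + (n : ℂ)))
          = (s + s*(n:ℂ)) * (ascPochhammer ℂ n).eval (1 + s + s*(n:ℂ)) := by
        have harg : (s - s*a) + s*(a + (n : ℂ)) = s + s*(n:ℂ) := by ring
        rw [harg, pochPeelLeft]
        have harg2 : s + s*(n:ℂ) + 1 = 1 + s + s*(n:ℂ) := by ring
        rw [harg2]
      have hs4 : (ascPochhammer ℂ (n+1)).eval (s - s*a)
          = (s - s*a) * (ascPochhammer ℂ n).eval (-s*a + s + 1) := by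
        rw [pochPeelLeft]
        have harg : s - s*a + 1 = -s*a + s + 1 := by ring
        rw [harg]
      rw [hs3, hs4] at hstep4
      rw [hs1, hs2]
      linear_combination (a * (a + (n:ℂ)) * (a + (n:ℂ)) * (ascPochhammer ℂ n).eval a) * hstep4
end

section
/- Let n be a positive integer and a, b complex numbers with b ≠ 2, 1 + a − b ≠ 0, b + n − 2 ≠ 0, and such that (b)_k ≠ 0 and (2 + n(1 − a)/(b − 2))_k ≠ 0 for all 0 ≤ k ≤ n − 1. Then the terminating series satisfies ₃F₂(2, a, 1 − n; b, 2 + n(1 − a)/(b − 2); 1) = (an − b − n + 2)(b − 1) / ((1 + a − b)(b + n − 2)). -/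
open Complex Finset

/-!
With `d = 1 - n` and `c = 2 + n(1 - a)/(b - 2)` the parameters satisfy
`(a - 1)(d - 1) = (b - 2)(c - 2)`, and under this relation the summand
`t_k = (k + 1) (a)_k (d)_k / ((b)_k (c)_k)` is Gosper-summable: with
`P_k = (a)_k (d)_k / ((b)_k (c)_k)` and `R_k = (b - 1 + k)(c - 1 + k) P_k` one has
`R_{k+1} - R_k = (a + d - b - c + 2) t_k`, because
`(a + k)(d + k) - (b - 1 + k)(c - 1 + k) - (a + d - b - c + 2)(k + 1) = (a - 1)(d - 1) - (b - 2)(c - 2)`.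
The sum telescopes to `R_n - R_0 = -(b - 1)(c - 1)`, since `(1 - n)_n = 0`, and
`(a + d - b - c + 2)(b - 2) = (1 + a - b)(b + n - 2)`.
-/

lemma ascPochhammer_eval_one_sub_natCast_of_le {R : Type*} [Ring R] {n k : ℕ} (hn : 0 < n)
    (hk : n ≤ k) : (ascPochhammer R k).eval (1 - (n : R)) = 0 := by
  have h : (1 : R) - n = -((n - 1 : ℕ) : R) := by
    rw [Nat.cast_sub hn, Nat.cast_one, neg_sub]
  rw [h, ascPochhammer_eval_neg_coe_nat_of_lt (by omega)]

lemma add_natCast_ne_zero_of_ascPochhammer_succ {S : Type*} [Semiring S] {x : S} {k : ℕ}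
    (h : (ascPochhammer S (k + 1)).eval x ≠ 0) : x + k ≠ 0 :=
  right_ne_zero_of_mul (by rwa [← ascPochhammer_succ_eval])

noncomputable def hyp3F2Term (a₁ a₂ a₃ b₁ b₂ : ℂ) (k : ℕ) : ℂ :=
  (ascPochhammer ℂ k).eval a₁ * (ascPochhammer ℂ k).eval a₂ * (ascPochhammer ℂ k).eval a₃ /
    ((ascPochhammer ℂ k).eval b₁ * (ascPochhammer ℂ k).eval b₂ * (Nat.factorial k : ℂ))

lemma hyp3F2_eq_sum_range {a₁ a₂ a₃ b₁ b₂ : ℂ} {N : ℕ}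
    (h : ∀ k, N ≤ k → (ascPochhammer ℂ k).eval a₃ = 0) :
    hyp3F2 a₁ a₂ a₃ b₁ b₂ = ∑ k ∈ range N, hyp3F2Term a₁ a₂ a₃ b₁ b₂ k :=
  tsum_eq_sum fun k hk => by
    simp [h k (not_lt.mp (mem_range.not.mp hk))]

section GosperSummable

variable (a d b c : ℂ)

noncomputable def pochRatio (k : ℕ) : ℂ :=
  (ascPochhammer ℂ k).eval a * (ascPochhammer ℂ k).eval d /
    ((ascPochhammer ℂ k).eval b * (ascPochhammer ℂ k).eval c)

noncomputable def pochAntidiff (k : ℕ) : ℂ :=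
  (b - 1 + k) * (c - 1 + k) * pochRatio a d b c k

lemma hyp3F2Term_two (k : ℕ) : hyp3F2Term 2 a d b c k = (k + 1) * pochRatio a d b c k := by
  have h := factorial_mul_ascPochhammer ℂ 1 k
  have hfac : (k.factorial : ℂ) ≠ 0 := Nat.cast_ne_zero.mpr k.factorial_ne_zero
  norm_num [add_comm 1 k, Nat.factorial_succ] at h
  rw [hyp3F2Term, pochRatio, h]
  field_simp

variable {a d b c}

-- At the last term of a terminating sum `b + k` may vanish; then `d + k = 0` kills both sides.
lemma mul_pochRatio_succ {k : ℕ} (hk : (b + k) * (c + k) ≠ 0 ∨ d + k = 0) :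
    (b + k) * (c + k) * pochRatio a d b c (k + 1) = (a + k) * (d + k) * pochRatio a d b c k := by
  have hsucc : pochRatio a d b c (k + 1) =
      (a + k) * (d + k) * pochRatio a d b c k / ((b + k) * (c + k)) := by
    simp only [pochRatio, ascPochhammer_succ_eval, div_eq_mul_inv, mul_inv]
    ring
  rcases hk with hbc | hd
  · rw [hsucc, mul_div_cancel₀ _ hbc]
  · simp [pochRatio, ascPochhammer_succ_eval, hd]

lemma pochAntidiff_eq_zero {N : ℕ} (h : (ascPochhammer ℂ N).eval d = 0) :
    pochAntidiff a d b c N = 0 := by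
  simp [pochAntidiff, pochRatio, h]

lemma pochAntidiff_succ_sub (hrel : (a - 1) * (d - 1) = (b - 2) * (c - 2)) {k : ℕ}
    (hk : (b + k) * (c + k) ≠ 0 ∨ d + k = 0) :
    pochAntidiff a d b c (k + 1) - pochAntidiff a d b c k =
      (a + d - b - c + 2) * hyp3F2Term 2 a d b c k := by
  rw [pochAntidiff, pochAntidiff, hyp3F2Term_two]
  push_cast
  linear_combination mul_pochRatio_succ (a := a) hk + pochRatio a d b c k * hrel

lemma mul_sum_range_hyp3F2Term_two (hrel : (a - 1) * (d - 1) = (b - 2) * (c - 2)) {N : ℕ}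
    (hstep : ∀ k < N, (b + k) * (c + k) ≠ 0 ∨ d + k = 0) :
    (a + d - b - c + 2) * ∑ k ∈ range N, hyp3F2Term 2 a d b c k =
      pochAntidiff a d b c N - (b - 1) * (c - 1) := by
  rw [mul_sum, ← sum_congr rfl fun k hk => pochAntidiff_succ_sub hrel (hstep k (mem_range.mp hk)),
    sum_range_sub]
  simp [pochAntidiff, pochRatio]

end GosperSummable

lemma telescoping_condition_of_ascPochhammer_ne_zero {n : ℕ} {b c : ℂ}
    (hb : ∀ k < n, (ascPochhammer ℂ k).eval b ≠ 0) (hc : ∀ k < n, (ascPochhammer ℂ k).eval c ≠ 0)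
    {k : ℕ} (hk : k < n) : (b + k) * (c + k) ≠ 0 ∨ 1 - (n : ℂ) + k = 0 := by
  rcases Nat.lt_or_ge (k + 1) n with hk1 | hk1
  · exact .inl <| mul_ne_zero (add_natCast_ne_zero_of_ascPochhammer_succ (hb (k + 1) hk1))
      (add_natCast_ne_zero_of_ascPochhammer_succ (hc (k + 1) hk1))
  · right
    rw [show n = k + 1 by omega]
    push_cast
    ring

theorem stmt17 (n : ℕ) (hn : 0 < n) (a b : ℂ)
    (hb2 : b ≠ 2) (hab : 1 + a - b ≠ 0) (hbn : b + (n : ℂ) - 2 ≠ 0)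
    (h1 : ∀ k < n, (ascPochhammer ℂ k).eval b ≠ 0)
    (h2 : ∀ k < n, (ascPochhammer ℂ k).eval (2 + (n : ℂ)*(1 - a)/(b - 2)) ≠ 0) :
    hyp3F2 2 a (1 - (n : ℂ)) b (2 + (n : ℂ)*(1 - a)/(b - 2)) =
      (a*(n : ℂ) - b - (n : ℂ) + 2) * (b - 1) / ((1 + a - b) * (b + (n : ℂ) - 2)) := by
  set c := 2 + (n : ℂ) * (1 - a) / (b - 2) with hc
  have hb2' : b - 2 ≠ 0 := sub_ne_zero.mpr hb2
  have hrel : (a - 1) * (1 - n - 1) = (b - 2) * (c - 2) := by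
    rw [hc]
    field_simp
    ring
  have hden : (1 + a - b) * (b + n - 2) = (a + (1 - n) - b - c + 2) * (b - 2) := by
    rw [hc]
    field_simp
    ring
  have hsum := mul_sum_range_hyp3F2Term_two hrel
    (N := n) fun k => telescoping_condition_of_ascPochhammer_ne_zero h1 h2
  rw [pochAntidiff_eq_zero (ascPochhammer_eval_one_sub_natCast_of_le hn le_rfl)] at hsum
  rw [hyp3F2_eq_sum_range fun k => ascPochhammer_eval_one_sub_natCast_of_le hn,
    eq_div_iff (mul_ne_zero hab hbn), hden]
  linear_combination (b - 2) * hsum + (b - 1) * hrel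
end
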